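/- Let g : [a,b] → ℝ be C¹. Then the convex envelope conv_{[a,b]} g is C¹ on [a,b] (one-sided derivatives at the endpoints), and for any interior point u ∈ (a,b) where g(u) = conv_{[a,b]} g (u), the derivatives coincide: g'(u) = (conv_{[a,b]} g)'(u). -/

import Mathlib

open Set Filter Topology

lemma affine_convexOn (s : Set ℝ) (hs : Convex ℝ s) (c q u : ℝ) :
    ConvexOn ℝ s (fun x => c + q * (x - u)) := by
  refine ⟨hs, fun x _ y _ p r hp hr hpr => le_of_eq ?_⟩
  simp only [smul_eq_mul]
  ring_nf
  linear_combination (c - q * u) * hpr.symm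

/-- The convex envelope of `g` on the interval `[a,b]`: the pointwise supremum of all
convex functions on `[a,b]` lying below `g` on `[a,b]`. -/
noncomputable def convEnv (a b : ℝ) (g : ℝ → ℝ) : ℝ → ℝ :=
  fun u => sSup {y : ℝ | ∃ h : ℝ → ℝ, ConvexOn ℝ (Set.Icc a b) h ∧
    (∀ x ∈ Set.Icc a b, h x ≤ g x) ∧ y = h u}

set_option maxHeartbeats 2000000 in
theorem stmt2 (a b : ℝ) (hab : a < b) (g : ℝ → ℝ)
    (hg : ContDiffOn ℝ 1 g (Set.Icc a b)) :
    ∃ m : ℝ → ℝ, ContinuousOn m (Set.Icc a b) ∧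
      (∀ u ∈ Set.Icc a b, HasDerivWithinAt (convEnv a b g) (m u) (Set.Icc a b) u) ∧
      ∀ u ∈ Set.Ioo a b, convEnv a b g u = g u →
        m u = derivWithin g (Set.Icc a b) u := by
  have ha : a ∈ Icc a b := left_mem_Icc.2 hab.le
  have hb : b ∈ Icc a b := right_mem_Icc.2 hab.le
  set φ : ℝ → ℝ := convEnv a b g with hφdef
  set S : ℝ → Set ℝ := fun u => {y : ℝ | ∃ h : ℝ → ℝ, ConvexOn ℝ (Set.Icc a b) h ∧
    (∀ x ∈ Set.Icc a b, h x ≤ g x) ∧ y = h u} with hSdef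
  have hφS : ∀ u, φ u = sSup (S u) := fun u => rfl
  -- Lipschitz constant for g
  have hgdiff : DifferentiableOn ℝ g (Icc a b) := hg.differentiableOn one_ne_zero
  obtain ⟨K, hK0, hKg⟩ : ∃ K : ℝ, 0 ≤ K ∧ ∀ x ∈ Icc a b, ∀ y ∈ Icc a b,
      |g y - g x| ≤ K * |y - x| := by
    have hcd : ContinuousOn (derivWithin g (Icc a b)) (Icc a b) :=
      hg.continuousOn_derivWithin (uniqueDiffOn_Icc hab) le_rfl
    obtain ⟨K, hK⟩ := (isCompact_Icc (a := a) (b := b)).exists_bound_of_continuousOn hcd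
    refine ⟨max K 0, le_max_right _ _, fun x hx y hy => ?_⟩
    have := Convex.norm_image_sub_le_of_norm_derivWithin_le hgdiff
      (C := max K 0) (fun z hz => (hK z hz).trans (le_max_left _ _)) (convex_Icc a b) hx hy
    simpa [Real.norm_eq_abs] using this
  -- lower affine minorants
  set la : ℝ → ℝ := fun x => g a + (-K) * (x - a) with hladef
  set lb : ℝ → ℝ := fun x => g b + K * (x - b) with hlbdef
  have hla_le : ∀ x ∈ Icc a b, la x ≤ g x := by
    intro x hx
    have h1 := hKg a ha x hx
    have h2 : |x - a| = x - a := abs_of_nonneg (by linarith [hx.1])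
    rw [h2] at h1
    have := abs_le.1 h1
    simp only [hladef]
    linarith [this.1]
  have hlb_le : ∀ x ∈ Icc a b, lb x ≤ g x := by
    intro x hx
    have h1 := hKg b hb x hx
    have h2 : |x - b| = b - x := by rw [abs_sub_comm]; exact abs_of_nonneg (by linarith [hx.2])
    rw [h2] at h1
    have := abs_le.1 h1
    simp only [hlbdef]
    nlinarith [this.1]
  have hla_conv : ConvexOn ℝ (Icc a b) la := affine_convexOn _ (convex_Icc a b) _ _ _
  have hlb_conv : ConvexOn ℝ (Icc a b) lb := affine_convexOn _ (convex_Icc a b) _ _ _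
  have hne : ∀ u, (S u).Nonempty := fun u => ⟨la u, la, hla_conv, hla_le, rfl⟩
  have hbddS : ∀ u ∈ Icc a b, BddAbove (S u) := by
    rintro u hu
    exact ⟨g u, by rintro y ⟨h, hc, hl, rfl⟩; exact hl u hu⟩
  have hle_φ : ∀ h : ℝ → ℝ, ConvexOn ℝ (Icc a b) h → (∀ x ∈ Icc a b, h x ≤ g x) →
      ∀ u ∈ Icc a b, h u ≤ φ u := by
    intro h hc hl u hu
    exact le_csSup (hbddS u hu) ⟨h, hc, hl, rfl⟩
  have hφ_le_g : ∀ u ∈ Icc a b, φ u ≤ g u := by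
    intro u hu
    exact csSup_le (hne u) (by rintro y ⟨h, hc, hl, rfl⟩; exact hl u hu)
  have hla_le_φ : ∀ x ∈ Icc a b, la x ≤ φ x := hle_φ la hla_conv hla_le
  have hlb_le_φ : ∀ x ∈ Icc a b, lb x ≤ φ x := hle_φ lb hlb_conv hlb_le
  have hφa : φ a = g a := le_antisymm (hφ_le_g a ha) (by simpa [hladef] using hla_le_φ a ha)
  have hφb : φ b = g b := le_antisymm (hφ_le_g b hb) (by simpa [hlbdef] using hlb_le_φ b hb)
  have hφconv : ConvexOn ℝ (Icc a b) φ := by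
    refine ⟨convex_Icc a b, fun x hx y hy p r hp hr hpr => ?_⟩
    rw [hφS]
    refine csSup_le (hne _) ?_
    rintro z ⟨h, hc, hl, rfl⟩
    calc h (p • x + r • y) ≤ p • h x + r • h y := hc.2 hx hy hp hr hpr
      _ ≤ p • φ x + r • φ y := by
          have h1 := hle_φ h hc hl x hx
          have h2 := hle_φ h hc hl y hy
          simp only [smul_eq_mul]
          nlinarith
  have hsm : ∀ u ∈ Icc a b, MonotoneOn (slope φ u) (Icc a b \ {u}) :=
    fun u hu => hφconv.slope_mono hu
  -- slope bounds
  have hslope_ub' : ∀ x ∈ Icc a b, ∀ y ∈ Icc a b, x < y → slope φ x y ≤ K := by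
    intro x hx y hy hxy
    have hxb : x ≠ b := fun h => absurd (h ▸ hxy) (by simp [h]; linarith [hy.2, h ▸ hxy])
    have hxb' : x < b := lt_of_le_of_ne hx.2 hxb
    have h1 : slope φ x y ≤ slope φ x b :=
      hsm x hx ⟨hy, hxy.ne'⟩ ⟨hb, Ne.symm hxb⟩ hy.2
    have h2 : slope φ x b ≤ K := by
      rw [slope_def_field, hφb]
      rw [div_le_iff₀ (by linarith : (0:ℝ) < b - x)]
      have := hlb_le_φ x hx
      simp only [hlbdef] at this
      nlinarith
    exact h1.trans h2
  have hslope_lb' : ∀ x ∈ Icc a b, ∀ y ∈ Icc a b, x < y → -K ≤ slope φ x y := by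
    intro x hx y hy hxy
    have hay : a < y := lt_of_le_of_lt hx.1 hxy
    rw [slope_comm]
    have h1 : slope φ y a ≤ slope φ y x :=
      hsm y hy ⟨ha, hay.ne⟩ ⟨hx, hxy.ne⟩ hx.1
    have h2 : -K ≤ slope φ y a := by
      rw [slope_def_field, hφa]
      rw [le_div_iff_of_neg (by linarith : a - y < 0)]
      have := hla_le_φ y hy
      simp only [hladef] at this
      nlinarith
    exact h2.trans h1
  have hslope_ub : ∀ x ∈ Icc a b, ∀ y ∈ Icc a b, x ≠ y → slope φ x y ≤ K := by
    intro x hx y hy hxy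
    rcases lt_or_gt_of_ne hxy with h | h
    · exact hslope_ub' x hx y hy h
    · rw [slope_comm]; exact hslope_ub' y hy x hx h
  have hslope_lb : ∀ x ∈ Icc a b, ∀ y ∈ Icc a b, x ≠ y → -K ≤ slope φ x y := by
    intro x hx y hy hxy
    rcases lt_or_gt_of_ne hxy with h | h
    · exact hslope_lb' x hx y hy h
    · rw [slope_comm]; exact hslope_lb' y hy x hx h
  -- continuity of φ
  have hφcont : ContinuousOn φ (Icc a b) := by
    refine LipschitzOnWith.continuousOn (K := K.toNNReal) ?_
    refine LipschitzOnWith.of_dist_le_mul ?_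
    intro x hx y hy
    rcases eq_or_ne x y with rfl | hxy
    · simp
    · rw [Real.dist_eq, Real.dist_eq]
      have : φ x - φ y = slope φ y x * (x - y) := by
        rw [slope_def_field, div_mul_cancel₀ _ (sub_ne_zero.2 hxy)]
      rw [this, abs_mul]
      have h1 : |slope φ y x| ≤ K := abs_le.2
        ⟨hslope_lb y hy x hx (Ne.symm hxy), hslope_ub y hy x hx (Ne.symm hxy)⟩
      have h2 : (K.toNNReal : ℝ) = K := Real.coe_toNNReal _ hK0
      rw [h2]
      exact mul_le_mul_of_nonneg_right h1 (abs_nonneg _)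
  -- one-sided derivative quantities
  set dR : ℝ → ℝ := fun u => sInf (slope φ u '' Ioo u b) with hdRdef
  set dL : ℝ → ℝ := fun u => sSup (slope φ u '' Ioo a u) with hdLdef
  have hbddR : ∀ u ∈ Ico a b, BddBelow (slope φ u '' Ioo u b) := by
    intro u hu
    refine ⟨-K, ?_⟩
    rintro z ⟨w, hw, rfl⟩
    exact hslope_lb u ⟨hu.1, hu.2.le⟩ w ⟨(hu.1.trans hw.1.le), hw.2.le⟩ hw.1.ne
  have hbddL : ∀ u ∈ Ioc a b, BddAbove (slope φ u '' Ioo a u) := by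
    intro u hu
    refine ⟨K, ?_⟩
    rintro z ⟨w, hw, rfl⟩
    exact hslope_ub u ⟨hu.1.le, hu.2⟩ w ⟨hw.1.le, hw.2.le.trans hu.2⟩ hw.2.ne'
  have hneR : ∀ u ∈ Ico a b, (slope φ u '' Ioo u b).Nonempty :=
    fun u hu => ((nonempty_Ioo.2 hu.2).image _)
  have hneL : ∀ u ∈ Ioc a b, (slope φ u '' Ioo a u).Nonempty :=
    fun u hu => ((nonempty_Ioo.2 hu.1).image _)
  -- basic inequalities
  have hRle : ∀ u ∈ Ico a b, ∀ x ∈ Ioc u b, dR u ≤ slope φ u x := by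
    intro u hu x hx
    obtain ⟨w, hw⟩ := exists_between hx.1
    have hwm : w ∈ Ioo u b := ⟨hw.1, hw.2.trans_le hx.2⟩
    refine (csInf_le (hbddR u hu) ⟨w, hwm, rfl⟩).trans ?_
    exact hsm u ⟨hu.1, hu.2.le⟩ ⟨⟨hu.1.trans hwm.1.le, hwm.2.le⟩, hwm.1.ne'⟩
      ⟨⟨hu.1.trans hx.1.le, hx.2⟩, hx.1.ne'⟩ hw.2.le
  have hleR : ∀ u ∈ Ico a b, ∀ x ∈ Ico a u, slope φ u x ≤ dR u := by
    intro u hu x hx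
    refine le_csInf (hneR u hu) ?_
    rintro z ⟨w, hw, rfl⟩
    exact hsm u ⟨hu.1, hu.2.le⟩ ⟨⟨hx.1, hx.2.le.trans hu.2.le⟩, hx.2.ne⟩
      ⟨⟨hu.1.trans hw.1.le, hw.2.le⟩, hw.1.ne'⟩ (hx.2.le.trans hw.1.le)
  have hleL : ∀ u ∈ Ioc a b, ∀ x ∈ Ico a u, slope φ u x ≤ dL u := by
    intro u hu x hx
    obtain ⟨w, hw⟩ := exists_between hx.2
    have hwm : w ∈ Ioo a u := ⟨lt_of_le_of_lt hx.1 hw.1, hw.2⟩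
    refine le_trans ?_ (le_csSup (hbddL u hu) ⟨w, hwm, rfl⟩)
    exact hsm u ⟨hu.1.le, hu.2⟩ ⟨⟨hx.1, (hx.2.le.trans hu.2)⟩, hx.2.ne⟩
      ⟨⟨hwm.1.le, hwm.2.le.trans hu.2⟩, hwm.2.ne⟩ hw.1.le
  have hLle : ∀ u ∈ Ioc a b, ∀ x ∈ Ioc u b, dL u ≤ slope φ u x := by
    intro u hu x hx
    refine csSup_le (hneL u hu) ?_
    rintro z ⟨w, hw, rfl⟩
    exact hsm u ⟨hu.1.le, hu.2⟩ ⟨⟨hw.1.le, hw.2.le.trans hu.2⟩, hw.2.ne⟩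
      ⟨⟨hu.1.le.trans hx.1.le, hx.2⟩, hx.1.ne'⟩ (hw.2.le.trans hx.1.le)
  have hLR : ∀ u ∈ Ioo a b, dL u ≤ dR u := by
    intro u hu
    refine csSup_le (hneL u ⟨hu.1, hu.2.le⟩) ?_
    rintro z ⟨w, hw, rfl⟩
    exact hleR u ⟨hu.1.le, hu.2⟩ w ⟨hw.1.le, hw.2⟩
  -- tendsto of slopes
  have hTR : ∀ u ∈ Ico a b, Tendsto (slope φ u) (𝓝[>] u) (𝓝 (dR u)) := by
    intro u hu
    exact MonotoneOn.tendsto_nhdsWithin_Ioo_right (nonempty_Ioo.2 hu.2)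
      ((hsm u ⟨hu.1, hu.2.le⟩).mono (fun x hx => ⟨⟨hu.1.trans hx.1.le, hx.2.le⟩, hx.1.ne'⟩))
      (hbddR u hu)
  have hTL : ∀ u ∈ Ioc a b, Tendsto (slope φ u) (𝓝[<] u) (𝓝 (dL u)) := by
    intro u hu
    exact MonotoneOn.tendsto_nhdsWithin_Ioo_left (nonempty_Ioo.2 hu.1)
      ((hsm u ⟨hu.1.le, hu.2⟩).mono (fun x hx => ⟨⟨hx.1.le, hx.2.le.trans hu.2⟩, hx.2.ne⟩))
      (hbddL u hu)
  -- contact points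
  have hg' : ∀ u ∈ Icc a b, HasDerivWithinAt g (derivWithin g (Icc a b) u) (Icc a b) u :=
    fun u hu => (hgdiff u hu).hasDerivWithinAt
  have hcontactR : ∀ u ∈ Ioo a b, φ u = g u → dR u ≤ derivWithin g (Icc a b) u := by
    intro u hu hgu
    have ht : Tendsto (slope g u) (𝓝[>] u) (𝓝 (derivWithin g (Icc a b) u)) := by
      refine (hasDerivWithinAt_iff_tendsto_slope.1 (hg' u ⟨hu.1.le, hu.2.le⟩)).mono_left ?_
      rw [← nhdsWithin_Ioo_eq_nhdsGT hu.2]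
      exact nhdsWithin_mono _ (fun x hx => ⟨⟨(hu.1.trans hx.1).le, hx.2.le⟩, hx.1.ne'⟩)
    refine ge_of_tendsto ht ?_
    filter_upwards [Ioo_mem_nhdsGT hu.2] with x hx
    have h1 : dR u ≤ slope φ u x := hRle u ⟨hu.1.le, hu.2⟩ x ⟨hx.1, hx.2.le⟩
    refine h1.trans ?_
    rw [slope_def_field, slope_def_field, hgu]
    have hφx : φ x ≤ g x := hφ_le_g x ⟨(hu.1.trans hx.1).le, hx.2.le⟩
    gcongr
    linarith [hx.1]
  have hcontactL : ∀ u ∈ Ioo a b, φ u = g u → derivWithin g (Icc a b) u ≤ dL u := by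
    intro u hu hgu
    have ht : Tendsto (slope g u) (𝓝[<] u) (𝓝 (derivWithin g (Icc a b) u)) := by
      refine (hasDerivWithinAt_iff_tendsto_slope.1 (hg' u ⟨hu.1.le, hu.2.le⟩)).mono_left ?_
      rw [← nhdsWithin_Ioo_eq_nhdsLT hu.1]
      exact nhdsWithin_mono _ (fun x hx => ⟨⟨hx.1.le, (hx.2.trans hu.2).le⟩, hx.2.ne⟩)
    refine le_of_tendsto ht ?_
    filter_upwards [Ioo_mem_nhdsLT hu.1] with x hx
    have h1 : slope φ u x ≤ dL u := hleL u ⟨hu.1, hu.2.le⟩ x ⟨hx.1.le, hx.2⟩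
    refine le_trans ?_ h1
    have heq1 : slope g u x = (g u - g x) / (u - x) := by
      rw [slope_def_field, ← neg_div_neg_eq]; ring_nf
    have heq2 : slope φ u x = (φ u - φ x) / (u - x) := by
      rw [slope_def_field, ← neg_div_neg_eq]; ring_nf
    rw [heq1, heq2, hgu]
    have hφx : φ x ≤ g x := hφ_le_g x ⟨hx.1.le, (hx.2.trans hu.2).le⟩
    gcongr
    linarith [hx.2]
  -- non-contact points
  have hflat : ∀ u ∈ Ioo a b, φ u < g u → dR u ≤ dL u := by
    intro u hu hlt
    by_contra hcon
    push_neg at hcon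
    set c := (dL u + dR u) / 2 with hc
    have hc1 : dL u < c := by rw [hc]; linarith
    have hc2 : c < dR u := by rw [hc]; linarith
    set η := g u - φ u with hη
    have hη0 : 0 < η := by rw [hη]; linarith
    have hgc : ContinuousAt g u :=
      (hg.continuousOn u ⟨hu.1.le, hu.2.le⟩).continuousAt (Icc_mem_nhds hu.1 hu.2)
    obtain ⟨δ₁, hδ₁0, hδ₁⟩ := Metric.continuousAt_iff.1 hgc (η/2) (by linarith)
    have habs : (0:ℝ) < |c| + 1 := by positivity
    set δ := min δ₁ ((η/8)/(|c|+1)) with hδ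
    have hδ0 : 0 < δ := lt_min hδ₁0 (by positivity)
    set ε := min (η/8) (min ((dR u - c)*δ) ((c - dL u)*δ)) with hε
    have hε0 : 0 < ε :=
      lt_min (by linarith) (lt_min (mul_pos (by linarith) hδ0) (mul_pos (by linarith) hδ0))
    set l : ℝ → ℝ := fun x => (φ u + ε) + c * (x - u) with hl
    have hlconv : ConvexOn ℝ (Icc a b) l := affine_convexOn _ (convex_Icc a b) _ _ _
    have hlle : ∀ x ∈ Icc a b, l x ≤ g x := by
      intro x hx
      rcases lt_or_ge (|x - u|) δ with hxd | hxd
      · have hgx : |g x - g u| < η/2 := by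
          have := hδ₁ (x := x) (by rw [Real.dist_eq]; exact hxd.trans_le (min_le_left _ _))
          rwa [Real.dist_eq] at this
        have h1 : c * (x - u) ≤ |c| * δ := by
          calc c * (x - u) ≤ |c * (x - u)| := le_abs_self _
            _ = |c| * |x - u| := abs_mul _ _
            _ ≤ |c| * δ := mul_le_mul_of_nonneg_left hxd.le (abs_nonneg c)
        have h2 : |c| * δ ≤ η/8 := by
          have hδle : δ ≤ (η/8)/(|c|+1) := min_le_right _ _
          have h3 : |c| * δ ≤ (|c|+1) * δ := by nlinarith [abs_nonneg c, hδ0.le]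
          have h4 : (|c|+1) * δ ≤ (|c|+1) * ((η/8)/(|c|+1)) :=
            mul_le_mul_of_nonneg_left hδle (by positivity)
          have h5 : (|c|+1) * ((η/8)/(|c|+1)) = η/8 := by field_simp
          linarith
        have h3 : ε ≤ η/8 := min_le_left _ _
        have h4 := (abs_le.1 hgx.le).1
        have h5 : φ u = g u - η := by rw [hη]; ring
        simp only [hl]
        linarith
      · rcases lt_or_ge u x with hux | hxu
        · have hxu' : δ ≤ x - u := by
            rwa [abs_of_pos (by linarith)] at hxd
          have hs := hRle u ⟨hu.1.le, hu.2⟩ x ⟨hux, hx.2⟩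
          rw [slope_def_field] at hs
          have hx0 : (0:ℝ) < x - u := by linarith
          have hφx : φ u + dR u * (x - u) ≤ φ x := by
            have := (le_div_iff₀ hx0).1 hs
            linarith
          have hεle : ε ≤ (dR u - c) * δ := (min_le_right _ _).trans (min_le_left _ _)
          have hprod : (dR u - c) * δ ≤ (dR u - c) * (x - u) :=
            mul_le_mul_of_nonneg_left hxu' (by linarith)
          have hlφ : l x ≤ φ x := by
            simp only [hl]
            nlinarith
          exact hlφ.trans (hφ_le_g x hx)
        · have hxu' : δ ≤ u - x := by
            rw [abs_sub_comm] at hxd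
            rcases eq_or_ne x u with rfl | hne
            · simp at hxd; linarith
            · rwa [abs_of_pos (lt_of_le_of_ne (by
                rcases lt_or_ge x u with h | h
                · linarith
                · exfalso
                  have : x = u := le_antisymm hxu h
                  exact hne this) (by
                intro hcc
                exact hne (by linarith)))] at hxd
          have hxlt : x < u := by linarith
          have hs := hleL u ⟨hu.1, hu.2.le⟩ x ⟨hx.1, hxlt⟩
          rw [slope_def_field] at hs
          have hx0 : x - u < 0 := by linarith
          have hφx : φ u + dL u * (x - u) ≤ φ x := by
            have := (div_le_iff_of_neg hx0).1 hs
            linarith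
          have hεle : ε ≤ (c - dL u) * δ := (min_le_right _ _).trans (min_le_right _ _)
          have hprod : (c - dL u) * δ ≤ (c - dL u) * (u - x) :=
            mul_le_mul_of_nonneg_left hxu' (by linarith)
          have hlφ : l x ≤ φ x := by
            simp only [hl]
            nlinarith
          exact hlφ.trans (hφ_le_g x hx)
    have hcontra : l u ≤ φ u := hle_φ l hlconv hlle u ⟨hu.1.le, hu.2.le⟩
    simp only [hl] at hcontra
    linarith
  have hint : ∀ u ∈ Ioo a b, dL u = dR u := by
    intro u hu
    rcases lt_or_eq_of_le (hφ_le_g u ⟨hu.1.le, hu.2.le⟩) with h | h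
    · exact le_antisymm (hLR u hu) (hflat u hu h)
    · exact le_antisymm (hLR u hu) ((hcontactR u hu h).trans (hcontactL u hu h))
  -- the derivative function
  set m : ℝ → ℝ := fun u => if u < b then dR u else dL u with hmdef
  have hmR : ∀ u, u < b → m u = dR u := fun u h => if_pos h
  have hmb : m b = dL b := if_neg (lt_irrefl b)
  have hmL : ∀ u ∈ Ioc a b, m u = dL u := by
    intro u hu
    rcases lt_or_eq_of_le hu.2 with h | h
    · rw [hmR u h, hint u ⟨hu.1, h⟩]
    · subst h; exact hmb
  have hmono : MonotoneOn m (Icc a b) := by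
    intro u hu v hv huv
    rcases eq_or_lt_of_le huv with rfl | h
    · exact le_refl _
    have hub : u < b := h.trans_le hv.2
    rw [hmR u hub]
    have h1 : dR u ≤ slope φ u v := hRle u ⟨hu.1, hub⟩ v ⟨h, hv.2⟩
    have h2 : slope φ u v = slope φ v u := slope_comm ..
    have hav : a < v := lt_of_le_of_lt hu.1 h
    have h3 : slope φ v u ≤ dL v := hleL v ⟨hav, hv.2⟩ u ⟨hu.1, h⟩
    have h4 : dL v ≤ m v := by
      rcases lt_or_eq_of_le hv.2 with hvb | hvb
      · rw [hmR v hvb]; exact hLR v ⟨hav, hvb⟩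
      · subst hvb; rw [hmb]
    linarith
  have hderiv : ∀ u ∈ Icc a b, HasDerivWithinAt φ (m u) (Icc a b) u := by
    intro u hu
    rw [hasDerivWithinAt_iff_tendsto_slope]
    have hsplit : Icc a b \ {u} = Ico a u ∪ Ioc u b := by
      ext x
      simp only [mem_diff, mem_Icc, mem_singleton_iff, mem_union, mem_Ico, mem_Ioc]
      constructor
      · rintro ⟨⟨h1, h2⟩, h3⟩
        rcases lt_or_gt_of_ne h3 with h | h
        · exact Or.inl ⟨h1, h⟩
        · exact Or.inr ⟨h, h2⟩
      · rintro (⟨h1, h2⟩ | ⟨h1, h2⟩)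
        · exact ⟨⟨h1, h2.le.trans hu.2⟩, h2.ne⟩
        · exact ⟨⟨hu.1.trans h1.le, h2⟩, h1.ne'⟩
    rw [hsplit, nhdsWithin_union, tendsto_sup]
    constructor
    · rcases eq_or_lt_of_le hu.1 with rfl | hau
      · rw [Ico_self, nhdsWithin_empty]
        exact tendsto_bot
      · rw [hmL u ⟨hau, hu.2⟩]
        exact (hTL u ⟨hau, hu.2⟩).mono_left (nhdsWithin_mono _ Ico_subset_Iio_self)
    · rcases eq_or_lt_of_le hu.2 with rfl | hub
      · rw [Ioc_self, nhdsWithin_empty]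
        exact tendsto_bot
      · rw [hmR u hub]
        exact (hTR u ⟨hu.1, hub⟩).mono_left (nhdsWithin_mono _ Ioc_subset_Ioi_self)
  have hcont : ContinuousOn m (Icc a b) := by
    intro u hu
    have hsplit : Icc a b = (Ico a u ∪ Ioc u b) ∪ {u} := by
      ext x
      simp only [mem_union, mem_Icc, mem_Ico, mem_Ioc, mem_singleton_iff]
      constructor
      · rintro ⟨h1, h2⟩
        rcases lt_trichotomy x u with h | h | h
        · exact Or.inl (Or.inl ⟨h1, h⟩)
        · exact Or.inr h
        · exact Or.inl (Or.inr ⟨h, h2⟩)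
      · rintro ((⟨h1, h2⟩ | ⟨h1, h2⟩) | rfl)
        · exact ⟨h1, h2.le.trans hu.2⟩
        · exact ⟨hu.1.trans h1.le, h2⟩
        · exact hu
    show Tendsto m (𝓝[Icc a b] u) (𝓝 (m u))
    rw [hsplit, nhdsWithin_union, nhdsWithin_union, tendsto_sup]
    refine ⟨?_, ?_⟩
    swap
    · rw [nhdsWithin_singleton]
      exact tendsto_pure_nhds m u
    rw [tendsto_sup]
    constructor
    · -- left part
      rcases eq_or_lt_of_le hu.1 with rfl | hau
      · rw [Ico_self, nhdsWithin_empty]; exact tendsto_bot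
      have h1 : MonotoneOn m (Ioo a u) :=
        hmono.mono (fun x hx => ⟨hx.1.le, hx.2.le.trans hu.2⟩)
      have h2 : BddAbove (m '' Ioo a u) := by
        refine ⟨m u, ?_⟩
        rintro z ⟨v, hv, rfl⟩
        exact hmono ⟨hv.1.le, hv.2.le.trans hu.2⟩ hu hv.2.le
      have h3 := MonotoneOn.tendsto_nhdsWithin_Ioo_left (nonempty_Ioo.2 hau) h1 h2
      have hS : sSup (m '' Ioo a u) = m u := by
        refine le_antisymm (csSup_le ((nonempty_Ioo.2 hau).image _) ?_) ?_
        · rintro z ⟨v, hv, rfl⟩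
          exact hmono ⟨hv.1.le, hv.2.le.trans hu.2⟩ hu hv.2.le
        · rw [hmL u ⟨hau, hu.2⟩]
          refine csSup_le (hneL u ⟨hau, hu.2⟩) ?_
          rintro z ⟨w, hw, rfl⟩
          have hφt : Tendsto φ (𝓝[<] u) (𝓝 (φ u)) := by
            rw [← nhdsWithin_Ioo_eq_nhdsLT hau]
            exact (hφcont u hu).mono_left
              (nhdsWithin_mono _ (fun x hx => ⟨hx.1.le, hx.2.le.trans hu.2⟩))
          have hst : Tendsto (fun v => slope φ w v) (𝓝[<] u) (𝓝 (slope φ w u)) := by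
            simp only [slope_def_field]
            have hd : Tendsto (fun v : ℝ => v - w) (𝓝[<] u) (𝓝 (u - w)) :=
              ((continuous_id.sub continuous_const).tendsto u).mono_left nhdsWithin_le_nhds
            exact (hφt.sub tendsto_const_nhds).div hd (sub_ne_zero.2 hw.2.ne')
          have hev : ∀ᶠ v in 𝓝[<] u, slope φ w v ≤ m v := by
            filter_upwards [Ioo_mem_nhdsLT hw.2] with v hv
            have hvb : v < b := hv.2.trans_le hu.2
            have hva : a < v := hw.1.trans hv.1
            rw [hmR v hvb]
            calc slope φ w v = slope φ v w := slope_comm ..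
              _ ≤ dL v := hleL v ⟨hva, hvb.le⟩ w ⟨hw.1.le, hv.1⟩
              _ ≤ dR v := hLR v ⟨hva, hvb⟩
          have := le_of_tendsto_of_tendsto hst h3 hev
          rwa [slope_comm] at this
      rw [hS] at h3
      exact h3.mono_left (nhdsWithin_mono _ Ico_subset_Iio_self)
    · -- right part
      rcases eq_or_lt_of_le hu.2 with rfl | hub
      · rw [Ioc_self, nhdsWithin_empty]; exact tendsto_bot
      have h1 : MonotoneOn m (Ioo u b) :=
        hmono.mono (fun x hx => ⟨hu.1.trans hx.1.le, hx.2.le⟩)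
      have h2 : BddBelow (m '' Ioo u b) := by
        refine ⟨m u, ?_⟩
        rintro z ⟨v, hv, rfl⟩
        exact hmono hu ⟨hu.1.trans hv.1.le, hv.2.le⟩ hv.1.le
      have h3 := MonotoneOn.tendsto_nhdsWithin_Ioo_right (nonempty_Ioo.2 hub) h1 h2
      have hS : sInf (m '' Ioo u b) = m u := by
        refine le_antisymm ?_ (le_csInf ((nonempty_Ioo.2 hub).image _) ?_)
        swap
        · rintro z ⟨v, hv, rfl⟩
          exact hmono hu ⟨hu.1.trans hv.1.le, hv.2.le⟩ hv.1.le
        · rw [hmR u hub]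
          refine le_csInf (hneR u ⟨hu.1, hub⟩) ?_
          rintro z ⟨w, hw, rfl⟩
          have hφt : Tendsto φ (𝓝[>] u) (𝓝 (φ u)) := by
            rw [← nhdsWithin_Ioo_eq_nhdsGT hub]
            exact (hφcont u hu).mono_left
              (nhdsWithin_mono _ (fun x hx => ⟨hu.1.trans hx.1.le, hx.2.le⟩))
          have hst : Tendsto (fun v => slope φ v w) (𝓝[>] u) (𝓝 (slope φ u w)) := by
            simp only [slope_def_field]
            have hd : Tendsto (fun v : ℝ => w - v) (𝓝[>] u) (𝓝 (w - u)) :=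
              ((continuous_const.sub continuous_id).tendsto u).mono_left nhdsWithin_le_nhds
            exact (tendsto_const_nhds.sub hφt).div hd (sub_ne_zero.2 hw.1.ne')
          have hev : ∀ᶠ v in 𝓝[>] u, m v ≤ slope φ v w := by
            filter_upwards [Ioo_mem_nhdsGT hw.1] with v hv
            have hva : a < v := hu.1.trans_lt hv.1
            have hvb : v < b := hv.2.trans hw.2
            rw [hmR v hvb]
            exact hRle v ⟨hva.le, hvb⟩ w ⟨hv.2, hw.2.le⟩
          exact le_of_tendsto_of_tendsto h3 hst hev
      rw [hS] at h3
      exact h3.mono_left (nhdsWithin_mono _ Ioc_subset_Ioi_self)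
  refine ⟨m, hcont, hderiv, ?_⟩
  intro u hu hgu
  rw [hmR u hu.2]
  exact le_antisymm (hcontactR u hu hgu)
    ((hcontactL u hu hgu).trans (le_of_eq (hint u hu)))
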